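/- arXiv:1003.2275 — 2 statements merged into one kernel-verified Lean document; each statement's English description precedes it below -/
import Mathlib

section
/- The identity ∫_{−1}^{1} ln|x − y| / √(1 − y²) dy = −π ln 2 holds for every x ∈ (−1, 1). -/
open Real MeasureTheory

namespace StmtAux

open intervalIntegral Set

noncomputable def f : ℝ → ℝ := fun x => Real.log |Real.sin x|

lemma f_meas : Measurable f :=
  Real.measurable_log.comp ((_root_.continuous_abs.comp Real.continuous_sin).measurable)

lemma f_neg (x : ℝ) : f (-x) = f x := by simp [f, Real.sin_neg]

lemma f_periodic : Function.Periodic f π := fun x => by simp [f, Real.sin_add_pi]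

lemma f_pi_sub (x : ℝ) : f (π - x) = f x := by simp [f, Real.sin_pi_sub]

lemma ae_ne (c : ℝ) : ∀ᵐ θ : ℝ, θ ≠ c := by
  rw [MeasureTheory.ae_iff]
  simpa using Real.volume_singleton

lemma intInt_log01 : IntervalIntegrable Real.log volume 0 1 := by
  have hg : IntervalIntegrable (fun x : ℝ => 2 * x ^ (-(1 : ℝ) / 2)) volume 0 1 :=
    (intervalIntegrable_rpow' (by norm_num)).const_mul 2
  refine hg.mono_fun' Real.measurable_log.aestronglyMeasurable ?_
  rw [Set.uIoc_of_le (by norm_num : (0:ℝ) ≤ 1)]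
  refine (MeasureTheory.ae_restrict_iff' measurableSet_Ioc).mpr (MeasureTheory.ae_of_all _ ?_)
  intro x hx
  have hx0 : 0 < x := hx.1
  have hs : 0 < Real.sqrt x := Real.sqrt_pos.mpr hx0
  have hlog : Real.log x ≤ 0 := Real.log_nonpos hx0.le hx.2
  have h2 : Real.log x = 2 * Real.log (Real.sqrt x) := by
    rw [Real.log_sqrt hx0.le]; ring
  have h3 : -Real.log (Real.sqrt x) ≤ (Real.sqrt x)⁻¹ := by
    have h := Real.log_le_sub_one_of_pos (inv_pos.mpr hs)
    rw [Real.log_inv] at h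
    have : 0 ≤ (Real.sqrt x)⁻¹ := (inv_pos.mpr hs).le
    linarith
  have hrw : x ^ (-(1 : ℝ) / 2) = (Real.sqrt x)⁻¹ := by
    rw [Real.sqrt_eq_rpow, ← Real.rpow_neg hx0.le]
    norm_num
  simp only [Real.norm_eq_abs, abs_of_nonpos hlog, hrw]
  linarith

lemma f_int1 : IntervalIntegrable f volume 0 (π / 2) := by
  have hπ : (1:ℝ) ≤ π / 2 := by linarith [Real.pi_gt_three]
  have hlog : IntervalIntegrable Real.log volume 0 (π / 2) :=
    intInt_log01.trans (intervalIntegrable_log (by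
      rw [Set.uIcc_of_le hπ]; intro h; exact absurd h.1 (by norm_num)))
  have hg : IntervalIntegrable (fun x : ℝ => -Real.log x + Real.log (π / 2)) volume 0 (π / 2) :=
    hlog.neg.add (intervalIntegrable_const)
  refine hg.mono_fun' (f_meas.aestronglyMeasurable) ?_
  rw [Set.uIoc_of_le (by linarith : (0:ℝ) ≤ π / 2)]
  refine (MeasureTheory.ae_restrict_iff' measurableSet_Ioc).mpr (MeasureTheory.ae_of_all _ ?_)
  intro θ hθ
  have h0 : 0 < θ := hθ.1
  have h2 : θ ≤ π / 2 := hθ.2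
  have hsin : 0 < Real.sin θ := Real.sin_pos_of_pos_of_lt_pi h0 (by linarith [Real.pi_pos])
  have hb : 2 / π * θ ≤ Real.sin θ := Real.mul_le_sin h0.le h2
  have hb0 : 0 < 2 / π * θ := by positivity
  have hlb : Real.log (2 / π) + Real.log θ ≤ Real.log (Real.sin θ) := by
    rw [← Real.log_mul (by positivity) h0.ne']
    exact Real.log_le_log hb0 hb
  have hub : Real.log (Real.sin θ) ≤ 0 := Real.log_nonpos hsin.le (Real.sin_le_one θ)
  have hkey : Real.log (2 / π) = -Real.log (π / 2) := by
    rw [← Real.log_inv]; norm_num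
  simp only [f, Real.norm_eq_abs, abs_of_pos hsin, abs_of_nonpos hub]
  linarith

lemma f_int_0pi : IntervalIntegrable f volume 0 π := by
  have h2 : IntervalIntegrable f volume (π / 2) π := by
    have := (f_int1.comp_sub_left π).symm
    have he : (fun x => f (π - x)) = f := funext f_pi_sub
    rw [he] at this
    have e1 : π - π / 2 = π / 2 := by ring
    have e2 : π - 0 = π := by ring
    rwa [e1, e2] at this
  exact f_int1.trans h2

lemma f_int_full : IntervalIntegrable f volume (-π) π := by
  have h := (f_int_0pi.comp_mul_left (c := -1) enorm_ne_top enorm_ne_top).symm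
  have he : (fun x => f (-1 * x)) = f := funext fun x => by rw [neg_one_mul, f_neg]
  rw [he] at h
  have e1 : π / (-1 : ℝ) = -π := by ring
  have e2 : (0 : ℝ) / (-1 : ℝ) = 0 := by ring
  rw [e1, e2] at h
  exact h.trans f_int_0pi

lemma f_int (a b : ℝ) (ha : -π ≤ a) (ha' : a ≤ π) (hb : -π ≤ b) (hb' : b ≤ π) :
    IntervalIntegrable f volume a b :=
  f_int_full.mono_set (by
    rw [Set.uIcc_of_le (by linarith [Real.pi_pos] : -π ≤ π)]
    exact Set.uIcc_subset_Icc ⟨ha, ha'⟩ ⟨hb, hb'⟩)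

lemma J_val : ∫ u in (0:ℝ)..π, f u = -(π * Real.log 2) := by
  have hπ := Real.pi_pos
  have hint1 : IntervalIntegrable f volume 0 (π / 2) :=
    f_int _ _ (by linarith) (by linarith) (by linarith) (by linarith)
  have hint2 : IntervalIntegrable f volume (π / 2) π :=
    f_int _ _ (by linarith) (by linarith) (by linarith) (by linarith)
  have h1 : ∫ u in (π/2:ℝ)..π, f u = ∫ u in (0:ℝ)..(π/2), f u := by
    have : ∫ u in (π/2:ℝ)..π, f u = ∫ u in (π/2:ℝ)..π, f (π - u) := by
      simp_rw [f_pi_sub]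
    rw [this, integral_comp_sub_left f π, show π - π/2 = π/2 from by ring,
      show π - π = 0 from by ring]
  have hJ2 : ∫ u in (0:ℝ)..π, f u = 2 * ∫ u in (0:ℝ)..(π/2), f u := by
    rw [← integral_add_adjacent_intervals hint1 hint2, h1]; ring
  have h2 : ∫ v in (0:ℝ)..(π/2), f (2 * v) = 2⁻¹ * ∫ u in (0:ℝ)..π, f u := by
    rw [integral_comp_mul_left f (two_ne_zero), show 2*(π/2) = π from by ring]
    norm_num
  have hcos_eq : (fun v : ℝ => Real.log |Real.cos v|) = fun v => f (π/2 - v) := by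
    funext v; simp [f, Real.sin_pi_div_two_sub]
  have hcos_int : IntervalIntegrable (fun v : ℝ => Real.log |Real.cos v|) volume 0 (π/2) := by
    rw [hcos_eq]
    have := (hint1.comp_sub_left (π/2)).symm
    have e1 : π/2 - 0 = π/2 := by ring
    have e2 : π/2 - π/2 = 0 := by ring
    rwa [e1, e2] at this
  have hcos_val : ∫ v in (0:ℝ)..(π/2), Real.log |Real.cos v| = ∫ u in (0:ℝ)..(π/2), f u := by
    rw [hcos_eq, integral_comp_sub_left f (π/2), show π/2 - π/2 = 0 from by ring, sub_zero]
  have h3 : ∫ v in (0:ℝ)..(π/2), f (2 * v)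
      = ∫ v in (0:ℝ)..(π/2), (Real.log 2 + f v + Real.log |Real.cos v|) := by
    refine integral_congr_ae ?_
    filter_upwards [ae_ne (π/2)] with v hv hvmem
    rw [Set.uIoc_of_le (by linarith : (0:ℝ) ≤ π/2)] at hvmem
    have h0 : 0 < v := hvmem.1
    have h2' : v < π/2 := lt_of_le_of_ne hvmem.2 hv
    have hs : 0 < Real.sin v := Real.sin_pos_of_pos_of_lt_pi h0 (by linarith)
    have hc : 0 < Real.cos v := Real.cos_pos_of_mem_Ioo ⟨by linarith, h2'⟩
    have : Real.sin (2 * v) = 2 * Real.sin v * Real.cos v := Real.sin_two_mul v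
    simp only [f, this]
    rw [abs_of_pos (by positivity), abs_of_pos hs, abs_of_pos hc,
      Real.log_mul (by positivity) hc.ne', Real.log_mul two_ne_zero hs.ne']
  have hfi2 : IntervalIntegrable (fun v : ℝ => Real.log 2 + f v) volume 0 (π/2) :=
    intervalIntegrable_const.add hint1
  have h4 : ∫ v in (0:ℝ)..(π/2), (Real.log 2 + f v + Real.log |Real.cos v|)
      = (π/2) * Real.log 2 + (∫ u in (0:ℝ)..(π/2), f u) + ∫ u in (0:ℝ)..(π/2), f u := by
    rw [integral_add hfi2 hcos_int, integral_add intervalIntegrable_const hint1, hcos_val]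
    simp
    try ring
  have := h2.symm.trans (h3.trans h4)
  rw [hJ2] at this ⊢
  linarith

end StmtAux

/-- `∫_{-1}^{1} ln|x - y| / √(1 - y²) dy = -π ln 2` for every `x ∈ (-1,1)`. -/
theorem stmt_3 (x : ℝ) (hx : x ∈ Set.Ioo (-1 : ℝ) 1) :
    ∫ y in Set.Ioo (-1 : ℝ) 1, Real.log |x - y| / Real.sqrt (1 - y ^ 2)
      = -(π * Real.log 2) := by
  open StmtAux intervalIntegral in
  obtain ⟨hx1, hx2⟩ := hx
  have hπ := Real.pi_pos
  set φ := Real.arccos x with hφdef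
  have hφ0 : 0 < φ := Real.arccos_pos.mpr hx2
  have hcosφ : Real.cos φ = x := Real.cos_arccos hx1.le hx2.le
  have hφπ : φ < π := lt_of_le_of_ne (Real.arccos_le_pi x) (fun h => by
    rw [h, Real.cos_pi] at hcosφ; linarith)
  -- Substitution y = cos θ
  have himg : Real.cos '' Set.Ioo 0 π = Set.Ioo (-1:ℝ) 1 := by
    ext y
    constructor
    · rintro ⟨θ, hθ, rfl⟩
      constructor
      · have := Real.strictAntiOn_cos ⟨hθ.1.le, hθ.2.le⟩ ⟨hπ.le, le_refl π⟩ hθ.2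
        rwa [Real.cos_pi] at this
      · have := Real.strictAntiOn_cos ⟨le_refl 0, hπ.le⟩ ⟨hθ.1.le, hθ.2.le⟩ hθ.1
        rwa [Real.cos_zero] at this
    · intro hy
      refine ⟨Real.arccos y, ⟨Real.arccos_pos.mpr hy.2, ?_⟩, Real.cos_arccos hy.1.le hy.2.le⟩
      refine lt_of_le_of_ne (Real.arccos_le_pi y) (fun h => ?_)
      have := Real.cos_arccos hy.1.le hy.2.le
      rw [h, Real.cos_pi] at this
      have := hy.1
      linarith
  have hsub : ∫ y in Set.Ioo (-1:ℝ) 1, Real.log |x - y| / Real.sqrt (1 - y^2)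
      = ∫ θ in Set.Ioo 0 π, Real.log |x - Real.cos θ| := by
    rw [← himg,
      MeasureTheory.integral_image_eq_integral_abs_deriv_smul measurableSet_Ioo
        (fun θ _ => (Real.hasDerivAt_cos θ).hasDerivWithinAt)
        (Real.injOn_cos.mono Set.Ioo_subset_Icc_self)]
    refine MeasureTheory.setIntegral_congr_fun measurableSet_Ioo (fun θ hθ => ?_)
    have hs : 0 < Real.sin θ := Real.sin_pos_of_pos_of_lt_pi hθ.1 hθ.2
    have h1 : Real.sqrt (1 - Real.cos θ ^ 2) = Real.sin θ := by
      rw [show 1 - Real.cos θ^2 = Real.sin θ^2 from by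
        rw [← Real.sin_sq_add_cos_sq θ]; ring, Real.sqrt_sq hs.le]
    simp only [smul_eq_mul, h1, abs_neg, abs_of_pos hs]
    field_simp
  have hIoc : ∫ θ in Set.Ioo 0 π, Real.log |x - Real.cos θ|
      = ∫ θ in (0:ℝ)..π, Real.log |x - Real.cos θ| := by
    rw [intervalIntegral.integral_of_le hπ.le, MeasureTheory.integral_Ioc_eq_integral_Ioo]
  -- pointwise splitting via product formula
  have hmain : ∫ θ in (0:ℝ)..π, Real.log |x - Real.cos θ|
      = ∫ θ in (0:ℝ)..π, (Real.log 2 + f ((θ+φ)/2) + f ((θ-φ)/2)) := by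
    refine intervalIntegral.integral_congr_ae ?_
    filter_upwards [ae_ne φ] with θ hneφ hmem
    rw [Set.uIoc_of_le hπ.le] at hmem
    have h0 : 0 < θ := hmem.1
    have hπθ : θ ≤ π := hmem.2
    have hs1 : 0 < Real.sin ((θ+φ)/2) :=
      Real.sin_pos_of_pos_of_lt_pi (by linarith) (by linarith)
    have hd : Real.sin ((θ-φ)/2) ≠ 0 := by
      rcases lt_or_gt_of_ne hneφ with h | h
      · have hpos := Real.sin_pos_of_pos_of_lt_pi (show 0 < (φ-θ)/2 by linarith)
          (by linarith)
        have : Real.sin ((θ-φ)/2) < 0 := by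
          rw [show (θ-φ)/2 = -((φ-θ)/2) from by ring, Real.sin_neg]; linarith
        exact this.ne
      · exact (Real.sin_pos_of_pos_of_lt_pi (by linarith) (by linarith)).ne'
    have hprod : x - Real.cos θ = -2 * Real.sin ((φ+θ)/2) * Real.sin ((φ-θ)/2) := by
      rw [← hcosφ]; exact Real.cos_sub_cos φ θ
    rw [hprod]
    have e1 : |(-2 : ℝ) * Real.sin ((φ+θ)/2) * Real.sin ((φ-θ)/2)|
        = 2 * |Real.sin ((θ+φ)/2)| * |Real.sin ((θ-φ)/2)| := by
      rw [abs_mul, abs_mul, show (φ+θ)/2 = (θ+φ)/2 from by ring,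
        show (φ-θ)/2 = -((θ-φ)/2) from by ring, Real.sin_neg, abs_neg]
      norm_num
    have habs1 : |Real.sin ((θ+φ)/2)| ≠ 0 := abs_ne_zero.mpr hs1.ne'
    rw [e1, Real.log_mul (by positivity) (abs_ne_zero.mpr hd),
      Real.log_mul two_ne_zero habs1]
    rfl
  -- integrability of the pieces
  have hiA : IntervalIntegrable (fun θ => f ((θ+φ)/2)) volume 0 π := by
    have h1 : IntervalIntegrable (fun u => f (u + φ/2)) volume 0 (π/2) := by
      have := (f_int (φ/2) (φ/2 + π/2) (by linarith) (by linarith) (by linarith)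
        (by linarith)).comp_add_right (φ/2)
      rwa [show φ/2 - φ/2 = 0 from by ring, show φ/2 + π/2 - φ/2 = π/2 from by ring] at this
    have h2 := h1.comp_mul_left (c := 2⁻¹) enorm_ne_top enorm_ne_top
    rw [show (0:ℝ)/2⁻¹ = 0 from by norm_num, show (π/2)/2⁻¹ = π from by ring] at h2
    have e : (fun x : ℝ => (fun u => f (u + φ/2)) (2⁻¹ * x)) = fun θ => f ((θ+φ)/2) := by
      funext θ; simp only; congr 1; ring
    rwa [e] at h2
  have hiB : IntervalIntegrable (fun θ => f ((θ-φ)/2)) volume 0 π := by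
    have h1 : IntervalIntegrable (fun u => f (u + -(φ/2))) volume 0 (π/2) := by
      have := (f_int (-(φ/2)) (-(φ/2) + π/2) (by linarith) (by linarith) (by linarith)
        (by linarith)).comp_add_right (-(φ/2))
      rwa [show -(φ/2) - -(φ/2) = 0 from by ring,
        show -(φ/2) + π/2 - -(φ/2) = π/2 from by ring] at this
    have h2 := h1.comp_mul_left (c := 2⁻¹) enorm_ne_top enorm_ne_top
    rw [show (0:ℝ)/2⁻¹ = 0 from by norm_num, show (π/2)/2⁻¹ = π from by ring] at h2
    have e : (fun x : ℝ => (fun u => f (u + -(φ/2))) (2⁻¹ * x)) = fun θ => f ((θ-φ)/2) := by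
      funext θ; simp only; congr 1; ring
    rwa [e] at h2
  -- split the integral
  have hsplit : ∫ θ in (0:ℝ)..π, (Real.log 2 + f ((θ+φ)/2) + f ((θ-φ)/2))
      = π * Real.log 2 + (∫ θ in (0:ℝ)..π, f ((θ+φ)/2)) + ∫ θ in (0:ℝ)..π, f ((θ-φ)/2) := by
    rw [intervalIntegral.integral_add (intervalIntegrable_const.add hiA) hiB,
      intervalIntegral.integral_add intervalIntegrable_const hiA]
    simp
  -- evaluate piece A
  have hA : ∫ θ in (0:ℝ)..π, f ((θ+φ)/2) = 2 * ∫ u in (φ/2)..(φ/2 + π/2), f u := by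
    have e : (fun θ : ℝ => f ((θ+φ)/2)) = fun θ => f (2⁻¹ * θ + φ/2) := by
      funext θ; congr 1; ring
    rw [e, intervalIntegral.integral_comp_mul_add f (by norm_num : (2:ℝ)⁻¹ ≠ 0) (φ/2),
      show 2⁻¹ * (0:ℝ) + φ/2 = φ/2 from by ring,
      show 2⁻¹ * π + φ/2 = φ/2 + π/2 from by ring]
    norm_num
  -- evaluate piece B and reflect
  have hB : ∫ θ in (0:ℝ)..π, f ((θ-φ)/2) = 2 * ∫ u in (-(φ/2))..(-(φ/2) + π/2), f u := by
    have e : (fun θ : ℝ => f ((θ-φ)/2)) = fun θ => f (2⁻¹ * θ + -(φ/2)) := by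
      funext θ; congr 1; ring
    rw [e, intervalIntegral.integral_comp_mul_add f (by norm_num : (2:ℝ)⁻¹ ≠ 0) (-(φ/2)),
      show 2⁻¹ * (0:ℝ) + -(φ/2) = -(φ/2) from by ring,
      show 2⁻¹ * π + -(φ/2) = -(φ/2) + π/2 from by ring]
    norm_num
  have hBrefl : ∫ u in (-(φ/2))..(-(φ/2) + π/2), f u = ∫ u in ((φ - π)/2)..(φ/2), f u := by
    have e : ∫ u in (-(φ/2))..(-(φ/2) + π/2), f u
        = ∫ u in (-(φ/2))..(-(φ/2) + π/2), f (-u) := by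
      simp_rw [f_neg]
    rw [e, intervalIntegral.integral_comp_neg f,
      show -(-(φ/2) + π/2) = (φ - π)/2 from by ring, show -(-(φ/2)) = φ/2 from by ring]
  have hadj : (∫ u in ((φ-π)/2)..(φ/2), f u) + ∫ u in (φ/2)..(φ/2 + π/2), f u
      = ∫ u in ((φ-π)/2)..((φ-π)/2 + π), f u := by
    rw [intervalIntegral.integral_add_adjacent_intervals
      (f_int _ _ (by linarith) (by linarith) (by linarith) (by linarith))
      (f_int _ _ (by linarith) (by linarith) (by linarith) (by linarith))]
    congr 1
    ring
  have hper : ∫ u in ((φ-π)/2)..((φ-π)/2 + π), f u = -(π * Real.log 2) := by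
    have := f_periodic.intervalIntegral_add_eq ((φ-π)/2) 0
    rw [this, zero_add, J_val]
  rw [hsub, hIoc, hmain, hsplit, hA, hB, hBrefl]
  have : (∫ u in ((φ-π)/2)..(φ/2), f u) + ∫ u in (φ/2)..(φ/2 + π/2), f u
      = -(π * Real.log 2) := hadj.trans hper
  linarith
end

section
/- Let x : [−ε₀, ε₀] → ℝ² be a C² unit-speed curve. Then for ε small enough and s, t ∈ [−1,1], s ≠ t, the function ln(|x(εt) − x(εs)| / (ε|t − s|)) is bounded by Cε for a constant C independent of ε, s, t. -/
lemma log_bound_aux {r δ : ℝ} (h : |r - 1| ≤ δ) (hδ : δ ≤ 1/4) :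
    |Real.log r| ≤ 2 * δ := by
  have hδ0 : 0 ≤ δ := le_trans (abs_nonneg _) h
  have hr1 : r - 1 ≤ δ := (abs_le.1 h).2
  have hr2 : -δ ≤ r - 1 := (abs_le.1 h).1
  have hr0 : 0 < r := by linarith
  rw [abs_le]
  constructor
  · have h1 : Real.log r⁻¹ ≤ r⁻¹ - 1 := Real.log_le_sub_one_of_pos (by positivity)
    rw [Real.log_inv] at h1
    have h2 : r⁻¹ - 1 ≤ 2 * δ := by
      rw [inv_eq_one_div, div_sub' (ne_of_gt hr0), div_le_iff₀ hr0]
      nlinarith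
    linarith
  · have := Real.log_le_sub_one_of_pos hr0
    linarith

/-- For a `C²` unit-speed curve `x : [-ε₀, ε₀] → ℝ²`, for `ε` small enough and
`s ≠ t` in `[-1,1]`, `|ln(‖x(εt) - x(εs)‖ / (ε|t-s|))| ≤ Cε` with `C`
independent of `ε, s, t`. -/
theorem stmt_7 (ε₀ : ℝ) (hε₀ : 0 < ε₀) (x : ℝ → EuclideanSpace ℝ (Fin 2))
    (hx : ContDiffOn ℝ 2 x (Set.Icc (-ε₀) ε₀))
    (hspeed : ∀ t ∈ Set.Icc (-ε₀) ε₀, ‖deriv x t‖ = 1) :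
    ∃ C > (0 : ℝ), ∃ ε₁ > (0 : ℝ), ε₁ ≤ ε₀ ∧
      ∀ ε : ℝ, 0 < ε → ε ≤ ε₁ →
        ∀ s ∈ Set.Icc (-1 : ℝ) 1, ∀ t ∈ Set.Icc (-1 : ℝ) 1, s ≠ t →
          |Real.log (‖x (ε * t) - x (ε * s)‖ / (ε * |t - s|))| ≤ C * ε := by
  set O : Set ℝ := Set.Ioo (-ε₀) ε₀ with hO
  have hopen : IsOpen O := isOpen_Ioo
  have hxO : ContDiffOn ℝ 2 x O := hx.mono Set.Ioo_subset_Icc_self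
  have hd1 : ContDiffOn ℝ 1 (deriv x) O := by
    have := hxO.deriv_of_isOpen hopen (m := 1) (by norm_num)
    exact this
  have hdd_cont : ContinuousOn (deriv (deriv x)) O :=
    hd1.continuousOn_deriv_of_isOpen hopen le_rfl
  set J : Set ℝ := Set.Icc (-(ε₀/2)) (ε₀/2) with hJdef
  have hJO : J ⊆ O := fun u hu => ⟨by linarith [hu.1], by linarith [hu.2]⟩
  have hJI : J ⊆ Set.Icc (-ε₀) ε₀ := fun u hu => ⟨by linarith [hu.1], by linarith [hu.2]⟩
  -- bound on second derivative
  obtain ⟨M, hM⟩ := isCompact_Icc.exists_bound_of_continuousOn (hdd_cont.mono hJO)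
  set M₁ : ℝ := |M| + 1 with hM₁def
  have hM₁0 : 0 < M₁ := by positivity
  have hM' : ∀ u ∈ J, ‖deriv (deriv x) u‖ ≤ M₁ := fun u hu =>
    (hM u hu).trans ((le_abs_self M).trans (by linarith))
  -- differentiability facts
  have hxdiff : ∀ u ∈ O, HasDerivAt x (deriv x u) u := by
    intro u hu
    exact ((hxO.contDiffAt (hopen.mem_nhds hu)).differentiableAt (by norm_num)).hasDerivAt
  have hddiff : ∀ u ∈ O, HasDerivAt (deriv x) (deriv (deriv x) u) u := by
    intro u hu
    exact ((hd1.contDiffAt (hopen.mem_nhds hu)).differentiableAt one_ne_zero).hasDerivAt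
  -- Lipschitz bound on deriv x over J
  have hlip : ∀ a ∈ J, ∀ u ∈ J, ‖deriv x u - deriv x a‖ ≤ M₁ * ‖u - a‖ := by
    intro a ha u hu
    exact (convex_Icc _ _).norm_image_sub_le_of_norm_hasDerivWithin_le
      (fun v hv => (hddiff v (hJO hv)).hasDerivWithinAt) hM' ha hu
  -- Taylor-type bound
  have key : ∀ a ∈ J, ∀ b ∈ J,
      ‖x b - x a - (b - a) • deriv x a‖ ≤ M₁ * |b - a| * |b - a| := by
    intro a ha b hb
    set v := deriv x a with hv
    set S : Set ℝ := Set.Icc (min a b) (max a b) with hS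
    have hSJ : S ⊆ J := by
      intro u hu
      constructor
      · exact le_trans (le_min ha.1 hb.1) hu.1
      · exact le_trans hu.2 (max_le ha.2 hb.2)
    have haS : a ∈ S := ⟨min_le_left _ _, le_max_left _ _⟩
    have hbS : b ∈ S := ⟨min_le_right _ _, le_max_right _ _⟩
    have hder : ∀ u ∈ S, HasDerivWithinAt (fun w => x w - w • v) (deriv x u - v) S u := by
      intro u hu
      have h1 : HasDerivAt x (deriv x u) u := hxdiff u (hJO (hSJ hu))
      have h2 : HasDerivAt (fun w : ℝ => w • v) ((1:ℝ) • v) u :=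
        (hasDerivAt_id u).smul_const v
      rw [one_smul] at h2
      exact (h1.sub h2).hasDerivWithinAt
    have hbound : ∀ u ∈ S, ‖deriv x u - v‖ ≤ M₁ * |b - a| := by
      intro u hu
      refine (hlip a ha u (hSJ hu)).trans ?_
      have : ‖u - a‖ ≤ |b - a| := by
        have h1 : dist u a ≤ max a b - min a b := Real.dist_le_of_mem_Icc hu haS
        rw [max_sub_min_eq_abs] at h1
        rwa [Real.norm_eq_abs, ← Real.dist_eq]
      exact mul_le_mul_of_nonneg_left this hM₁0.le
    have := (convex_Icc _ _).norm_image_sub_le_of_norm_hasDerivWithin_le hder hbound haS hbS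
    have heq : (x b - b • v) - (x a - a • v) = x b - x a - (b - a) • v := by
      rw [sub_smul]; abel
    rw [heq, Real.norm_eq_abs] at this
    exact this
  -- choose constants
  refine ⟨4 * M₁, by positivity, min (ε₀/2) (1/(8*M₁)), by positivity, by
      simp only [le_min_iff] at *
      exact min_le_of_left_le (by linarith), ?_⟩
  intro ε hε hε1 s hs t ht hst
  have hεa : ε ≤ ε₀/2 := le_trans hε1 (min_le_left _ _)
  have hεb : ε ≤ 1/(8*M₁) := le_trans hε1 (min_le_right _ _)
  set a := ε * s with hadef
  set b := ε * t with hbdef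
  have haJ : a ∈ J := by
    constructor
    · nlinarith [hs.1, hs.2]
    · nlinarith [hs.1, hs.2]
  have hbJ : b ∈ J := by
    constructor
    · nlinarith [ht.1, ht.2]
    · nlinarith [ht.1, ht.2]
  set d : ℝ := ε * |t - s| with hddef
  have hd0 : 0 < d := by
    apply mul_pos hε
    rw [abs_pos, sub_ne_zero]
    exact fun h => hst h.symm
  have hba : |b - a| = d := by
    rw [hadef, hbdef, ← mul_sub, abs_mul, abs_of_pos hε]
  have hnv : ‖deriv x a‖ = 1 := hspeed a (hJI haJ)
  have hkey := key a haJ b hbJ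
  rw [hba] at hkey
  have hsmul : ‖(b - a) • deriv x a‖ = d := by
    rw [norm_smul, hnv, mul_one, Real.norm_eq_abs, hba]
  have hub : ‖x b - x a‖ ≤ d + M₁ * d * d := by
    calc ‖x b - x a‖ = ‖(x b - x a - (b - a) • deriv x a) + (b - a) • deriv x a‖ := by
          congr 1; abel
    _ ≤ ‖x b - x a - (b - a) • deriv x a‖ + ‖(b - a) • deriv x a‖ := norm_add_le _ _
    _ ≤ M₁ * d * d + d := by rw [hsmul]; linarith
    _ = d + M₁ * d * d := by ring
  have hlb : d - M₁ * d * d ≤ ‖x b - x a‖ := by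
    have := norm_sub_norm_le ((b - a) • deriv x a) (x b - x a)
    rw [hsmul] at this
    have h2 : ‖(b - a) • deriv x a - (x b - x a)‖ = ‖x b - x a - (b - a) • deriv x a‖ := by
      rw [← norm_neg]; congr 1; abel
    rw [h2] at this
    linarith
  set r : ℝ := ‖x b - x a‖ / d with hrdef
  have hrd : |r - 1| ≤ M₁ * d := by
    rw [abs_le]
    constructor
    · rw [hrdef, le_sub_iff_add_le, le_div_iff₀ hd0]
      nlinarith
    · rw [hrdef, sub_le_iff_le_add, div_le_iff₀ hd0]
      nlinarith
  have hd2ε : d ≤ 2 * ε := by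
    rw [hddef]
    have : |t - s| ≤ 2 := by
      rw [abs_le]; constructor <;> [linarith [ht.1, hs.2]; linarith [ht.2, hs.1]]
    nlinarith
  have hrδ : |r - 1| ≤ 2 * M₁ * ε := by
    refine hrd.trans ?_
    calc M₁ * d ≤ M₁ * (2 * ε) := mul_le_mul_of_nonneg_left hd2ε hM₁0.le
    _ = 2 * M₁ * ε := by ring
  have hδsmall : 2 * M₁ * ε ≤ 1/4 := by
    have h8 : ε * (8 * M₁) ≤ 1 := by
      rw [← le_div_iff₀ (by positivity)]; exact hεb
    nlinarith
  have := log_bound_aux hrδ hδsmall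
  calc |Real.log (‖x (ε * t) - x (ε * s)‖ / (ε * |t - s|))| = |Real.log r| := by
        rw [hrdef, hddef, hadef, hbdef]
  _ ≤ 2 * (2 * M₁ * ε) := this
  _ = 4 * M₁ * ε := by ring
end
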